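/- Let (X, μ) be a measure space, let Q ⊆ X be a measurable set with 0 < μ(Q) < ∞, and let f : X → [0, ∞) be a measurable function integrable on Q. Let θ ∈ (0, 1), c ≥ 1 and M > 0 be real numbers, and suppose that (1/μ(Q))·∫_Q f dμ ≤ M. Then ((1/μ(Q))·∫_Q f^θ dμ)^{1/θ} ≤ M/(2c) + (M^{1−θ}/μ(Q))·∫_{Q ∩ {f > M/(2c)^{1/θ}}} f^θ dμ. -/

import Mathlib

open MeasureTheory

/-- Power-mean inequality combined with a superlevel-set splitting: the
measure-theoretic core of equations (4.32)–(4.33) of the paper. -/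
theorem power_mean_superlevel_split {X : Type*} [MeasurableSpace X]
    (μ : Measure X) (Q : Set X) (hQ : MeasurableSet Q)
    (hQ0 : 0 < μ Q) (hQfin : μ Q < ⊤)
    (f : X → ℝ) (hf : Measurable f) (hf0 : ∀ x, 0 ≤ f x)
    (hint : IntegrableOn f Q μ)
    (θ c M : ℝ) (hθ : θ ∈ Set.Ioo (0:ℝ) 1) (hc : 1 ≤ c) (hM : 0 < M)
    (havg : (1 / (μ Q).toReal) * ∫ x in Q, f x ∂μ ≤ M) :
    ((1 / (μ Q).toReal) * ∫ x in Q, (f x) ^ θ ∂μ) ^ (1 / θ) ≤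
      M / (2 * c) +
        (M ^ (1 - θ) / (μ Q).toReal) *
          ∫ x in Q ∩ {x | M / (2 * c) ^ (1 / θ) < f x}, (f x) ^ θ ∂μ := by
  obtain ⟨hθ0, hθ1⟩ := hθ
  have hQr : 0 < (μ Q).toReal := ENNReal.toReal_pos hQ0.ne' hQfin.ne
  have h2c : (0:ℝ) < 2 * c := by linarith
  set L : ℝ := M / (2 * c) ^ (1 / θ) with hL
  have hLpos : 0 < L := div_pos hM (Real.rpow_pos_of_pos h2c _)
  set E : Set X := {x | L < f x} with hE
  have hEmeas : MeasurableSet E := measurableSet_lt measurable_const hf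
  -- integrability of f^θ on Q
  have hintθ : IntegrableOn (fun x => f x ^ θ) Q μ := by
    have hmeas : Measurable fun x => f x ^ θ := hf.pow_const θ
    have hone : IntegrableOn (fun _ : X => (1:ℝ)) Q μ :=
      integrableOn_const hQfin.ne
    refine Integrable.mono' (g := fun x => 1 + f x) (hone.add hint)
      hmeas.aestronglyMeasurable (Filter.Eventually.of_forall fun x => ?_)
    have h1 : f x ^ θ ≤ 1 + f x := by
      rcases le_or_gt (f x) 1 with h | h
      · have : f x ^ θ ≤ 1 := by
          calc f x ^ θ ≤ 1 ^ θ := Real.rpow_le_rpow (hf0 x) h hθ0.le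
          _ = 1 := Real.one_rpow _
        nlinarith [hf0 x]
      · have : f x ^ θ ≤ f x ^ (1:ℝ) :=
          Real.rpow_le_rpow_of_exponent_le h.le hθ1.le
        rw [Real.rpow_one] at this
        linarith
    have : 0 ≤ f x ^ θ := Real.rpow_nonneg (hf0 x) θ
    rw [Real.norm_of_nonneg this]
    exact h1
  set A : ℝ := (1 / (μ Q).toReal) * ∫ x in Q, (f x) ^ θ ∂μ with hA
  have hAnonneg : 0 ≤ A := by
    have : 0 ≤ ∫ x in Q, (f x) ^ θ ∂μ :=
      setIntegral_nonneg hQ fun x _ => Real.rpow_nonneg (hf0 x) θ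
    positivity
  have hInonneg : 0 ≤ ∫ x in Q ∩ E, (f x) ^ θ ∂μ :=
    setIntegral_nonneg (hQ.inter hEmeas) fun x _ => Real.rpow_nonneg (hf0 x) θ
  -- Jensen: A ≤ M ^ θ
  have hjensen : A ≤ M ^ θ := by
    have hconc : ConcaveOn ℝ (Set.Ici 0) fun x : ℝ => x ^ θ :=
      Real.concaveOn_rpow hθ0.le hθ1.le
    have hcont : ContinuousOn (fun x : ℝ => x ^ θ) (Set.Ici 0) :=
      continuousOn_id.rpow_const fun x _ => Or.inr hθ0.le
    have hst := hconc.le_map_set_average hcont isClosed_Ici hQ0.ne' hQfin.ne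
      (Filter.Eventually.of_forall fun x => hf0 x) hint hintθ
    rw [setAverage_eq, setAverage_eq] at hst
    have h1 : A ≤ ((1 / (μ Q).toReal) * ∫ x in Q, f x ∂μ) ^ θ := by
      simpa [hA, smul_eq_mul, one_div, Measure.real] using hst
    calc A ≤ ((1 / (μ Q).toReal) * ∫ x in Q, f x ∂μ) ^ θ := h1
      _ ≤ M ^ θ := by
          apply Real.rpow_le_rpow _ havg hθ0.le
          have : 0 ≤ ∫ x in Q, f x ∂μ := setIntegral_nonneg hQ fun x _ => hf0 x
          positivity
  -- key: A ^ (1/θ) ≤ M ^ (1-θ) * A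
  have hkey : A ^ (1 / θ) ≤ M ^ (1 - θ) * A := by
    rcases eq_or_lt_of_le hAnonneg with h0 | hApos
    · rw [← h0, Real.zero_rpow (by positivity), mul_zero]
    · have heq : A ^ (1 / θ) = A ^ (1 / θ - 1) * A := by
        have h := Real.rpow_add hApos (1 / θ - 1) 1
        rw [Real.rpow_one] at h
        rw [← h]
        congr 1
        ring
      rw [heq]
      have h1 : A ^ (1 / θ - 1) ≤ (M ^ θ) ^ (1 / θ - 1) :=
        Real.rpow_le_rpow hAnonneg hjensen (by
          have : 1 ≤ 1 / θ := (le_div_iff₀ hθ0).2 (by linarith)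
          linarith)
      have h2 : (M ^ θ) ^ (1 / θ - 1) = M ^ (1 - θ) := by
        rw [← Real.rpow_mul hM.le]
        congr 1
        field_simp
      calc A ^ (1 / θ - 1) * A ≤ (M ^ θ) ^ (1 / θ - 1) * A :=
            mul_le_mul_of_nonneg_right h1 hAnonneg
        _ = M ^ (1 - θ) * A := by rw [h2]
  -- split A
  have hsplit : ∫ x in Q, (f x) ^ θ ∂μ
      = (∫ x in Q ∩ E, (f x) ^ θ ∂μ) + ∫ x in Q \ E, (f x) ^ θ ∂μ :=
    (integral_inter_add_diff hEmeas hintθ).symm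
  have hLθ : L ^ θ = M ^ θ / (2 * c) := by
    rw [hL, Real.div_rpow hM.le (Real.rpow_nonneg h2c.le _),
      ← Real.rpow_mul h2c.le, one_div, inv_mul_cancel₀ hθ0.ne', Real.rpow_one]
  have hdiff : ∫ x in Q \ E, (f x) ^ θ ∂μ ≤ L ^ θ * (μ Q).toReal := by
    have h1 : ∫ x in Q \ E, (f x) ^ θ ∂μ ≤ ∫ _ in Q \ E, L ^ θ ∂μ := by
      apply setIntegral_mono_on (hintθ.mono_set Set.diff_subset)
        (integrableOn_const ((measure_mono Set.diff_subset).trans_lt hQfin).ne)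
        (hQ.diff hEmeas)
      intro x hx
      exact Real.rpow_le_rpow (hf0 x) (not_lt.1 hx.2) hθ0.le
    have h2 : ∫ _ in Q \ E, L ^ θ ∂μ = (μ (Q \ E)).toReal * L ^ θ := by
      simp [setIntegral_const, smul_eq_mul, Measure.real]
    have h3 : (μ (Q \ E)).toReal ≤ (μ Q).toReal :=
      ENNReal.toReal_mono hQfin.ne (measure_mono Set.diff_subset)
    calc ∫ x in Q \ E, (f x) ^ θ ∂μ ≤ (μ (Q \ E)).toReal * L ^ θ := h1.trans_eq h2
      _ ≤ L ^ θ * (μ Q).toReal := by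
          rw [mul_comm]
          exact mul_le_mul_of_nonneg_left h3 (Real.rpow_nonneg hLpos.le _)
  have hAle : A ≤ L ^ θ + (1 / (μ Q).toReal) * ∫ x in Q ∩ E, (f x) ^ θ ∂μ := by
    rw [hA, hsplit]
    rw [mul_add]
    have : (1 / (μ Q).toReal) * ∫ x in Q \ E, (f x) ^ θ ∂μ ≤ L ^ θ := by
      rw [div_mul_eq_mul_div, one_mul, div_le_iff₀ hQr]
      exact hdiff
    linarith [this]
  have hMθ : M ^ (1 - θ) * M ^ θ = M := by
    rw [← Real.rpow_add hM]; norm_num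
  calc A ^ (1 / θ) ≤ M ^ (1 - θ) * A := hkey
    _ ≤ M ^ (1 - θ) * (L ^ θ + (1 / (μ Q).toReal) * ∫ x in Q ∩ E, (f x) ^ θ ∂μ) :=
        mul_le_mul_of_nonneg_left hAle (Real.rpow_nonneg hM.le _)
    _ = M / (2 * c) + (M ^ (1 - θ) / (μ Q).toReal) * ∫ x in Q ∩ E, (f x) ^ θ ∂μ := by
        rw [mul_add, hLθ]
        rw [← mul_div_assoc, hMθ]
        ring
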